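/- Let X, Y, Z : ℝ → ℝ be C³ functions such that X'(u) ≠ 0, Y'(v) ≠ 0, Z'(w) ≠ 0 for all real u, v, w. Suppose that for all u, v ∈ ℝ, setting w = −u−v: (Y(v) − Z(w))X'(u) + (X(u) − Z(w))Y'(v) − (X(u) + Y(v))Z'(w) = 0, and moreover Y(v) ≠ Z(w), X(u) ≠ Z(w), and X(u) + Y(v) ≠ 0. Then there exists a constant K ∈ ℝ such that X'''(t) = K·X'(t), Y'''(t) = K·Y'(t) and Z'''(t) = K·Z'(t) for all t ∈ ℝ. -/

import Mathlib

private lemma diffs3 {F : ℝ → ℝ} (h : ContDiff ℝ 3 F) :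
    Differentiable ℝ F ∧ Differentiable ℝ (deriv F) ∧ Differentiable ℝ (deriv (deriv F)) := by
  have h' : ContDiff ℝ (2 + 1 : WithTop ℕ∞) F := by norm_num; exact h
  have hd : ContDiff ℝ 2 (deriv F) := (contDiff_succ_iff_deriv.mp h').2.2
  have hd' : ContDiff ℝ (1 + 1 : WithTop ℕ∞) (deriv F) := by norm_num; exact hd
  have hdd : ContDiff ℝ 1 (deriv (deriv F)) := (contDiff_succ_iff_deriv.mp hd').2.2
  exact ⟨h.differentiable (by norm_num), hd.differentiable (by norm_num),
    hdd.differentiable (by norm_num)⟩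

/-- Key lemma: from the separable ZMC functional equation for a triple `(F,G,H)` with
`F + G ≠ 0`, derive the symmetric third-order identity. -/
private lemma key_id (F G H : ℝ → ℝ)
    (hF : ContDiff ℝ 3 F) (hG : ContDiff ℝ 3 G) (hH : ContDiff ℝ 3 H)
    (heq : ∀ u v : ℝ, (G v - H (-u - v)) * deriv F u + (F u - H (-u - v)) * deriv G v
      - (F u + G v) * deriv H (-u - v) = 0)
    (hc : ∀ u v : ℝ, F u + G v ≠ 0) :
    ∀ u v : ℝ,
      deriv (deriv (deriv H)) (-u - v) * (deriv F u * deriv G v)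
      + deriv H (-u - v) * (deriv (deriv F) u * deriv (deriv G) v)
      + deriv (deriv H) (-u - v)
          * (deriv F u * deriv (deriv G) v + deriv G v * deriv (deriv F) u) = 0 := by
  obtain ⟨dF0, dF1, dF2⟩ := diffs3 hF
  obtain ⟨dG0, dG1, dG2⟩ := diffs3 hG
  obtain ⟨dH0, dH1, dH2⟩ := diffs3 hH
  -- R7 : ∂_v of heq
  have R7 : ∀ u v : ℝ, (F u - H (-u - v)) * deriv (deriv G) v
      + deriv F u * (deriv G v + deriv H (-u - v))
      + (F u + G v) * deriv (deriv H) (-u - v) = 0 := by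
    intro u v
    have hm : HasDerivAt (fun t : ℝ => -u - t) (-1 : ℝ) v := by
      simpa using (hasDerivAt_id' v).const_sub (-u)
    have cH0 : HasDerivAt (fun t : ℝ => H (-u - t)) (deriv H (-u - v) * (-1)) v := by
      simpa [Function.comp_def] using ((dH0 (-u - v)).hasDerivAt).comp v hm
    have cH1 : HasDerivAt (fun t : ℝ => deriv H (-u - t))
        (deriv (deriv H) (-u - v) * (-1)) v := by
      simpa [Function.comp_def] using ((dH1 (-u - v)).hasDerivAt).comp v hm
    have t1 : HasDerivAt (fun t : ℝ => (G t - H (-u - t)) * deriv F u)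
        ((deriv G v - deriv H (-u - v) * (-1)) * deriv F u) v :=
      (((dG0 v).hasDerivAt).sub cH0).mul_const (deriv F u)
    have t2 : HasDerivAt (fun t : ℝ => (F u - H (-u - t)) * deriv G t)
        ((0 - deriv H (-u - v) * (-1)) * deriv G v
          + (F u - H (-u - v)) * deriv (deriv G) v) v :=
      ((hasDerivAt_const v (F u)).sub cH0).mul ((dG1 v).hasDerivAt)
    have t3 : HasDerivAt (fun t : ℝ => (F u + G t) * deriv H (-u - t))
        ((0 + deriv G v) * deriv H (-u - v)
          + (F u + G v) * (deriv (deriv H) (-u - v) * (-1))) v :=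
      ((hasDerivAt_const v (F u)).add ((dG0 v).hasDerivAt)).mul cH1
    have tot := (t1.add t2).sub t3
    have hfun : (fun t : ℝ => (G t - H (-u - t)) * deriv F u + (F u - H (-u - t)) * deriv G t
        - (F u + G t) * deriv H (-u - t)) = fun _ => (0 : ℝ) := funext fun t => heq u t
    have hz : HasDerivAt (fun t : ℝ => (G t - H (-u - t)) * deriv F u
        + (F u - H (-u - t)) * deriv G t - (F u + G t) * deriv H (-u - t)) 0 v := by
      rw [hfun]; exact hasDerivAt_const v 0
    have hres := tot.unique hz
    linear_combination hres
  -- R6 : ∂_u of heq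
  have R6 : ∀ u v : ℝ, (G v - H (-u - v)) * deriv (deriv F) u
      + deriv G v * (deriv F u + deriv H (-u - v))
      + (F u + G v) * deriv (deriv H) (-u - v) = 0 := by
    intro u v
    have hm : HasDerivAt (fun s : ℝ => -s - v) (-1 : ℝ) u := by
      simpa using ((hasDerivAt_id u).neg.sub_const v)
    have cH0 : HasDerivAt (fun s : ℝ => H (-s - v)) (deriv H (-u - v) * (-1)) u := by
      simpa [Function.comp_def] using ((dH0 (-u - v)).hasDerivAt).comp u hm
    have cH1 : HasDerivAt (fun s : ℝ => deriv H (-s - v))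
        (deriv (deriv H) (-u - v) * (-1)) u := by
      simpa [Function.comp_def] using ((dH1 (-u - v)).hasDerivAt).comp u hm
    have t1 : HasDerivAt (fun s : ℝ => (G v - H (-s - v)) * deriv F s)
        ((0 - deriv H (-u - v) * (-1)) * deriv F u
          + (G v - H (-u - v)) * deriv (deriv F) u) u :=
      ((hasDerivAt_const u (G v)).sub cH0).mul ((dF1 u).hasDerivAt)
    have t2 : HasDerivAt (fun s : ℝ => (F s - H (-s - v)) * deriv G v)
        ((deriv F u - deriv H (-u - v) * (-1)) * deriv G v) u :=
      (((dF0 u).hasDerivAt).sub cH0).mul_const (deriv G v)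
    have t3 : HasDerivAt (fun s : ℝ => (F s + G v) * deriv H (-s - v))
        (deriv F u * deriv H (-u - v)
          + (F u + G v) * (deriv (deriv H) (-u - v) * (-1))) u :=
      (((dF0 u).hasDerivAt).add_const (G v)).mul cH1
    have tot := (t1.add t2).sub t3
    have hfun : (fun s : ℝ => (G v - H (-s - v)) * deriv F s + (F s - H (-s - v)) * deriv G v
        - (F s + G v) * deriv H (-s - v)) = fun _ => (0 : ℝ) := funext fun s => heq s v
    have hz : HasDerivAt (fun s : ℝ => (G v - H (-s - v)) * deriv F s
        + (F s - H (-s - v)) * deriv G v - (F s + G v) * deriv H (-s - v)) 0 u := by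
      rw [hfun]; exact hasDerivAt_const u 0
    have hres := tot.unique hz
    linear_combination hres
  -- R5 : ∂_u of R7
  have R5 : ∀ u v : ℝ, (deriv F u + deriv H (-u - v)) * deriv (deriv G) v
      + (deriv G v + deriv H (-u - v)) * deriv (deriv F) u
      - (F u + G v) * deriv (deriv (deriv H)) (-u - v) = 0 := by
    intro u v
    have hm : HasDerivAt (fun s : ℝ => -s - v) (-1 : ℝ) u := by
      simpa using ((hasDerivAt_id u).neg.sub_const v)
    have cH0 : HasDerivAt (fun s : ℝ => H (-s - v)) (deriv H (-u - v) * (-1)) u := by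
      simpa [Function.comp_def] using ((dH0 (-u - v)).hasDerivAt).comp u hm
    have cH1 : HasDerivAt (fun s : ℝ => deriv H (-s - v))
        (deriv (deriv H) (-u - v) * (-1)) u := by
      simpa [Function.comp_def] using ((dH1 (-u - v)).hasDerivAt).comp u hm
    have cH2 : HasDerivAt (fun s : ℝ => deriv (deriv H) (-s - v))
        (deriv (deriv (deriv H)) (-u - v) * (-1)) u := by
      simpa [Function.comp_def] using ((dH2 (-u - v)).hasDerivAt).comp u hm
    have t1 : HasDerivAt (fun s : ℝ => (F s - H (-s - v)) * deriv (deriv G) v)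
        ((deriv F u - deriv H (-u - v) * (-1)) * deriv (deriv G) v) u :=
      (((dF0 u).hasDerivAt).sub cH0).mul_const (deriv (deriv G) v)
    have t2 : HasDerivAt (fun s : ℝ => deriv F s * (deriv G v + deriv H (-s - v)))
        (deriv (deriv F) u * (deriv G v + deriv H (-u - v))
          + deriv F u * (0 + deriv (deriv H) (-u - v) * (-1))) u :=
      ((dF1 u).hasDerivAt).mul ((hasDerivAt_const u (deriv G v)).add cH1)
    have t3 : HasDerivAt (fun s : ℝ => (F s + G v) * deriv (deriv H) (-s - v))
        (deriv F u * deriv (deriv H) (-u - v)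
          + (F u + G v) * (deriv (deriv (deriv H)) (-u - v) * (-1))) u :=
      (((dF0 u).hasDerivAt).add_const (G v)).mul cH2
    have tot := (t1.add t2).add t3
    have hfun : (fun s : ℝ => (F s - H (-s - v)) * deriv (deriv G) v
        + deriv F s * (deriv G v + deriv H (-s - v))
        + (F s + G v) * deriv (deriv H) (-s - v)) = fun _ => (0 : ℝ) :=
      funext fun s => R7 s v
    have hz : HasDerivAt (fun s : ℝ => (F s - H (-s - v)) * deriv (deriv G) v
        + deriv F s * (deriv G v + deriv H (-s - v))
        + (F s + G v) * deriv (deriv H) (-s - v)) 0 u := by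
      rw [hfun]; exact hasDerivAt_const u 0
    have hres := tot.unique hz
    linear_combination hres
  -- combine algebraically
  intro u v
  have e0 := heq u v
  have e6 := R6 u v
  have e7 := R7 u v
  have e5 := R5 u v
  have hne := hc u v
  have main : (F u + G v) * (deriv (deriv (deriv H)) (-u - v) * (deriv F u * deriv G v)
      + deriv H (-u - v) * (deriv (deriv F) u * deriv (deriv G) v)
      + deriv (deriv H) (-u - v)
          * (deriv F u * deriv (deriv G) v + deriv G v * deriv (deriv F) u)) = 0 := by
    linear_combination (deriv F u * deriv (deriv G) v) * e6
      + (deriv G v * deriv (deriv F) u) * e7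
      - (deriv F u * deriv G v) * e5
      - (deriv (deriv F) u * deriv (deriv G) v) * e0
  exact (mul_eq_zero.mp main).resolve_left hne

/-- If `X, Y, Z` are `C³` with nowhere-vanishing derivatives satisfying the separable zero
mean curvature equation `(Y−Z)X' + (X−Z)Y' − (X+Y)Z' = 0` on the plane `u+v+w=0`, together
with the nondegeneracy conditions `Y ≠ Z`, `X ≠ Z`, `X + Y ≠ 0` there, then there is a
constant `K` with `X''' = K·X'`, `Y''' = K·Y'` and `Z''' = K·Z'` everywhere. -/
theorem stmt_4 (X Y Z : ℝ → ℝ)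
    (hX : ContDiff ℝ 3 X) (hY : ContDiff ℝ 3 Y) (hZ : ContDiff ℝ 3 Z)
    (hX' : ∀ u : ℝ, deriv X u ≠ 0) (hY' : ∀ v : ℝ, deriv Y v ≠ 0)
    (hZ' : ∀ w : ℝ, deriv Z w ≠ 0)
    (heq : ∀ u v : ℝ,
      (Y v - Z (-u - v)) * deriv X u + (X u - Z (-u - v)) * deriv Y v
        - (X u + Y v) * deriv Z (-u - v) = 0)
    (hnd : ∀ u v : ℝ,
      Y v ≠ Z (-u - v) ∧ X u ≠ Z (-u - v) ∧ X u + Y v ≠ 0) :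
    ∃ K : ℝ,
      (∀ t : ℝ, deriv (deriv (deriv X)) t = K * deriv X t) ∧
      (∀ t : ℝ, deriv (deriv (deriv Y)) t = K * deriv Y t) ∧
      (∀ t : ℝ, deriv (deriv (deriv Z)) t = K * deriv Z t) := by
  have dneg : ∀ F : ℝ → ℝ, deriv (fun t => -F t) = fun t => -deriv F t :=
    fun F => funext fun _ => deriv.neg
  -- the three instances of the key identity
  have IDZ := key_id X Y Z hX hY hZ heq (fun u v => (hnd u v).2.2)
  have IDX : ∀ v w : ℝ,
      deriv (deriv (deriv X)) (-v - w) * (deriv Y v * deriv Z w)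
      + deriv X (-v - w) * (deriv (deriv Y) v * deriv (deriv Z) w)
      + deriv (deriv X) (-v - w)
          * (deriv Y v * deriv (deriv Z) w + deriv Z w * deriv (deriv Y) v) = 0 := by
    have heq2 : ∀ u v : ℝ, ((fun t => -Z t) v - (fun t => -X t) (-u - v)) * deriv Y u
        + (Y u - (fun t => -X t) (-u - v)) * deriv (fun t => -Z t) v
        - (Y u + (fun t => -Z t) v) * deriv (fun t => -X t) (-u - v) = 0 := by
      intro u v
      have h0 := heq (-u - v) u
      rw [show -(-u - v) - u = v from by ring] at h0
      simp only [deriv.fun_neg]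
      linear_combination h0
    have hc2 : ∀ u v : ℝ, Y u + (fun t => -Z t) v ≠ 0 := by
      intro u v
      have h0 := (hnd (-v - u) u).1
      rw [show -(-v - u) - u = v from by ring] at h0
      simpa [sub_eq_add_neg] using sub_ne_zero_of_ne h0
    intro v w
    have h0 := key_id Y (fun t => -Z t) (fun t => -X t) hY hZ.neg hX.neg heq2 hc2 v w
    simp only [dneg] at h0
    linear_combination h0
  have IDY : ∀ u w : ℝ,
      deriv (deriv (deriv Y)) (-u - w) * (deriv X u * deriv Z w)
      + deriv Y (-u - w) * (deriv (deriv X) u * deriv (deriv Z) w)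
      + deriv (deriv Y) (-u - w)
          * (deriv X u * deriv (deriv Z) w + deriv Z w * deriv (deriv X) u) = 0 := by
    have heq3 : ∀ u v : ℝ, ((fun t => -Z t) v - (fun t => -Y t) (-u - v)) * deriv X u
        + (X u - (fun t => -Y t) (-u - v)) * deriv (fun t => -Z t) v
        - (X u + (fun t => -Z t) v) * deriv (fun t => -Y t) (-u - v) = 0 := by
      intro u v
      have h0 := heq u (-u - v)
      rw [show -u - (-u - v) = v from by ring] at h0
      simp only [deriv.fun_neg]
      linear_combination h0
    have hc3 : ∀ u v : ℝ, X u + (fun t => -Z t) v ≠ 0 := by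
      intro u v
      have h0 := (hnd u (-u - v)).2.1
      rw [show -u - (-u - v) = v from by ring] at h0
      simpa [sub_eq_add_neg] using sub_ne_zero_of_ne h0
    intro u w
    have h0 := key_id X (fun t => -Z t) (fun t => -Y t) hX hZ.neg hY.neg heq3 hc3 u w
    simp only [dneg] at h0
    linear_combination h0
  -- pairwise proportionality of third derivatives
  have hxy : ∀ u v : ℝ,
      deriv (deriv (deriv X)) u * deriv Y v = deriv (deriv (deriv Y)) v * deriv X u := by
    intro u v
    have e1 := IDX v (-u - v)
    rw [show -v - (-u - v) = u from by ring] at e1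
    have e2 := IDY u (-u - v)
    rw [show -u - (-u - v) = v from by ring] at e2
    have h3 : deriv Z (-u - v)
        * (deriv (deriv (deriv X)) u * deriv Y v - deriv (deriv (deriv Y)) v * deriv X u)
        = 0 := by linear_combination e1 - e2
    have h4 := (mul_eq_zero.mp h3).resolve_left (hZ' (-u - v))
    linarith [h4]
  have hxz : ∀ u w : ℝ,
      deriv (deriv (deriv X)) u * deriv Z w = deriv (deriv (deriv Z)) w * deriv X u := by
    intro u w
    have e1 := IDX (-u - w) w
    rw [show -(-u - w) - w = u from by ring] at e1
    have e3 := IDZ u (-u - w)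
    rw [show -u - (-u - w) = w from by ring] at e3
    have h3 : deriv Y (-u - w)
        * (deriv (deriv (deriv X)) u * deriv Z w - deriv (deriv (deriv Z)) w * deriv X u)
        = 0 := by linear_combination e1 - e3
    have h4 := (mul_eq_zero.mp h3).resolve_left (hY' (-u - w))
    linarith [h4]
  refine ⟨deriv (deriv (deriv X)) 0 / deriv X 0, ?_, ?_, ?_⟩
  · intro t
    have k1 : deriv (deriv (deriv X)) t * deriv X 0 = deriv (deriv (deriv X)) 0 * deriv X t :=
      mul_left_cancel₀ (hY' 0)
        (by linear_combination (deriv X 0) * hxy t 0 - (deriv X t) * hxy 0 0)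
    rw [div_mul_eq_mul_div, eq_div_iff (hX' 0)]
    linear_combination k1
  · intro t
    have k1 := hxy 0 t
    rw [div_mul_eq_mul_div, eq_div_iff (hX' 0)]
    linear_combination -k1
  · intro t
    have k1 := hxz 0 t
    rw [div_mul_eq_mul_div, eq_div_iff (hX' 0)]
    linear_combination -k1
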